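/- Let L be a Euclidean lattice spanning a finite-dimensional real inner product space E, let F be a subspace of E with orthogonal complement F^⊥, and let π_F and π_{F^⊥} denote the orthogonal projections onto F and F^⊥. Then there are ℤ-module isomorphisms L/((L ∩ F) ⊕ (L ∩ F^⊥)) ≅ π_F(L)/(L ∩ F) ≅ π_{F^⊥}(L)/(L ∩ F^⊥) ≅ (π_F(L) ⊕ π_{F^⊥}(L))/L. -/

import Mathlib

open scoped RealInnerProductSpace Classical

noncomputable section

section LatticeDefs

variable {E : Type*} [NormedAddCommGroup E] [InnerProductSpace ℝ E] [FiniteDimensional ℝ E]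

/-- `L` is a Euclidean lattice in `E`: a finitely generated discrete `ℤ`-submodule
spanning `E` over `ℝ`. -/
def IsEucLattice (L : Submodule ℤ E) : Prop :=
  L.FG ∧ DiscreteTopology L ∧ Submodule.span ℝ (L : Set E) = ⊤

/-- The rank of a lattice: the dimension of its real span. -/
def latRank (L : Submodule ℤ E) : ℕ :=
  Module.finrank ℝ (Submodule.span ℝ (L : Set E))

/-- The volume of a lattice: the square root of the Gram determinant of a `ℤ`-basis
(set to `0` if no finite `ℤ`-basis exists). -/
def latVol (L : Submodule ℤ E) : ℝ :=
  if h : ∃ n : ℕ, Nonempty (Module.Basis (Fin n) ℤ L) then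
    Real.sqrt (Matrix.det (Matrix.of fun i j : Fin h.choose =>
      ⟪(↑(h.choose_spec.some i) : E), (↑(h.choose_spec.some j) : E)⟫))
  else 0

/-- The slope `μ(L) = (vol L) ^ (1 / rk L)`. -/
def latSlope (L : Submodule ℤ E) : ℝ :=
  latVol L ^ ((latRank L : ℝ)⁻¹)

/-- `M` is a (primitive) sublattice of `L`: `M = L ∩ F` for a real subspace `F`. -/
def IsSublatticeOf (L M : Submodule ℤ E) : Prop :=
  ∃ F : Submodule ℝ E, M = L ⊓ F.restrictScalars ℤ

/-- The minimal slope: the infimum (in fact minimum) of slopes of nonzero sublattices. -/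
def muMin (L : Submodule ℤ E) : ℝ :=
  sInf (latSlope '' {M : Submodule ℤ E | IsSublatticeOf L M ∧ M ≠ ⊥})

/-- The orthogonal projection of `E` onto a subspace `F`, as a `ℤ`-linear endomorphism. -/
def projMap (F : Submodule ℝ E) : E →ₗ[ℤ] E :=
  ((F.subtype.comp (Submodule.orthogonalProjectionOnto F).toLinearMap)).restrictScalars ℤ

/-- The image `π_F(L)` of a lattice under orthogonal projection onto `F`. -/
def projLat (F : Submodule ℝ E) (L : Submodule ℤ E) : Submodule ℤ E :=
  L.map (projMap F)

lemma projMap_mem_projLat (F : Submodule ℝ E) (L : Submodule ℤ E) {x : E} (hx : x ∈ L) :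
    projMap F x ∈ projLat F L :=
  Submodule.mem_map_of_mem hx

/-- The quotient lattice `L/M`: the image of `L` under the orthogonal projection onto the
orthogonal complement of the real span of `M`. -/
def quotLat (L M : Submodule ℤ E) : Submodule ℤ E :=
  projLat (Submodule.span ℝ (M : Set E))ᗮ L

/-- The maximal slope: the supremum (in fact maximum) of `μ(L/N)` over proper sublattices. -/
def muMax (L : Submodule ℤ E) : ℝ :=
  sSup ((fun N => latSlope (quotLat L N)) '' {N : Submodule ℤ E | IsSublatticeOf L N ∧ N ≠ L})

/-- `L` is semistable if its minimal slope equals its slope. -/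
def Semistable (L : Submodule ℤ E) : Prop :=
  muMin L = latSlope L

/-- `D` is the destabilizing sublattice of `L`: the maximal nonzero sublattice of slope
`μ_min(L)`. -/
def IsDestab (L D : Submodule ℤ E) : Prop :=
  IsSublatticeOf L D ∧ D ≠ ⊥ ∧ latSlope D = muMin L ∧
    ∀ M : Submodule ℤ E, IsSublatticeOf L M → M ≠ ⊥ → latSlope M = muMin L → M ≤ D

/-- `N₀` is the co-destabilizing sublattice of `L`: the minimal proper sublattice with
`μ(L/N₀) = μ_max(L)`. -/
def IsCodestab (L N₀ : Submodule ℤ E) : Prop :=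
  IsSublatticeOf L N₀ ∧ N₀ ≠ L ∧ latSlope (quotLat L N₀) = muMax L ∧
    ∀ N : Submodule ℤ E, IsSublatticeOf L N → N ≠ L → latSlope (quotLat L N) = muMax L → N₀ ≤ N

/-- The dual lattice `L* = {y | ⟨x, y⟩ ∈ ℤ for all x ∈ L}`. -/
def dualLat (L : Submodule ℤ E) : Submodule ℤ E :=
  ⨅ x ∈ L, Submodule.comap (((innerSL ℝ x).toLinearMap).restrictScalars ℤ)
    (Submodule.span ℤ ({1} : Set ℝ))

end LatticeDefs

section TensorDefs

variable {E F G : Type*}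
  [NormedAddCommGroup E] [InnerProductSpace ℝ E] [FiniteDimensional ℝ E]
  [NormedAddCommGroup F] [InnerProductSpace ℝ F] [FiniteDimensional ℝ F]
  [NormedAddCommGroup G] [InnerProductSpace ℝ G] [FiniteDimensional ℝ G]

/-- `t : E → F → G` realizes `G` as the tensor product `E ⊗ F` of inner product spaces:
it satisfies `⟨x ⊗ y, x' ⊗ y'⟩ = ⟨x, x'⟩⟨y, y'⟩`, its image spans `G`, and
`dim G = dim E · dim F`. -/
def IsTensorProdMap (t : E →ₗ[ℝ] F →ₗ[ℝ] G) : Prop :=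
  (∀ (x x' : E) (y y' : F), ⟪t x y, t x' y'⟫ = ⟪x, x'⟫ * ⟪y, y'⟫) ∧
  Submodule.span ℝ (Set.range fun p : E × F => t p.1 p.2) = ⊤ ∧
  Module.finrank ℝ G = Module.finrank ℝ E * Module.finrank ℝ F

/-- The tensor product lattice `L ⊗ M` inside the model `G` of `E ⊗ F`. -/
def tensorLat (t : E →ₗ[ℝ] F →ₗ[ℝ] G) (L : Submodule ℤ E) (M : Submodule ℤ F) :
    Submodule ℤ G :=
  Submodule.span ℤ {z : G | ∃ x ∈ L, ∃ y ∈ M, z = t x y}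

/-- The "tensor product" of two subspaces inside the model `G` of `E ⊗ F`. -/
def tensorSub (t : E →ₗ[ℝ] F →ₗ[ℝ] G) (A : Submodule ℝ E) (B : Submodule ℝ F) :
    Submodule ℝ G :=
  Submodule.span ℝ {z : G | ∃ x ∈ A, ∃ y ∈ B, z = t x y}

end TensorDefs

end


section AuxProof

variable {E : Type*} [NormedAddCommGroup E] [InnerProductSpace ℝ E] [FiniteDimensional ℝ E]

lemma projMap_apply' (F : Submodule ℝ E) (x : E) :
    projMap F x = (Submodule.orthogonalProjectionOnto F x : E) := rfl

lemma projMap_mem' (F : Submodule ℝ E) (x : E) : projMap F x ∈ F :=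
  (Submodule.orthogonalProjectionOnto F x).2

lemma projMap_eq_self' (F : Submodule ℝ E) {x : E} (hx : x ∈ F) : projMap F x = x := by
  exact (Submodule.starProjection_eq_self_iff (K := F)).mpr hx

lemma projMap_eq_zero' (F : Submodule ℝ E) {x : E} (hx : x ∈ Fᗮ) : projMap F x = 0 := by
  rw [projMap_apply', Submodule.orthogonalProjectionOnto_apply_of_mem_orthogonal hx,
    Submodule.coe_zero]

lemma projMap_add_orth (F : Submodule ℝ E) (x : E) :
    projMap F x + projMap Fᗮ x = x :=
  Submodule.starProjection_add_starProjection_orthogonal (K := F) x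

/-- Key membership equivalence: for `x ∈ L`, `π_F x ∈ L` iff `x ∈ (L∩F) ⊔ (L∩Fᗮ)`. -/
lemma projMap_mem_iff (L : Submodule ℤ E) (F : Submodule ℝ E) {x : E} (hx : x ∈ L) :
    projMap F x ∈ L ↔
      x ∈ (L ⊓ F.restrictScalars ℤ) ⊔ (L ⊓ Fᗮ.restrictScalars ℤ) := by
  constructor
  · intro h
    have hxeq := projMap_add_orth F x
    refine Submodule.mem_sup.mpr ⟨projMap F x, ⟨h, projMap_mem' F x⟩,
      projMap Fᗮ x, ⟨?_, projMap_mem' Fᗮ x⟩, hxeq⟩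
    have : projMap Fᗮ x = x - projMap F x := by rw [eq_sub_iff_add_eq, add_comm, hxeq]
    rw [this]; exact Submodule.sub_mem L hx h
  · intro h
    rcases Submodule.mem_sup.mp h with ⟨a, ha, b, hb, rfl⟩
    rw [map_add, projMap_eq_self' F ha.2, projMap_eq_zero' F hb.2, add_zero]
    exact ha.1

end AuxProof

/-- For a Euclidean lattice `L` spanning `E` and a subspace `F ⊆ E`,
one has `ℤ`-module isomorphisms
`L/((L∩F) ⊕ (L∩F^⊥)) ≅ π_F(L)/(L∩F) ≅ π_{F^⊥}(L)/(L∩F^⊥) ≅ (π_F(L) ⊕ π_{F^⊥}(L))/L`. -/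
theorem statement_18 {E : Type*} [NormedAddCommGroup E] [InnerProductSpace ℝ E]
    [FiniteDimensional ℝ E] (L : Submodule ℤ E) (hL : IsEucLattice L)
    (F : Submodule ℝ E) :
    Nonempty ((↥L ⧸ Submodule.comap L.subtype
        ((L ⊓ F.restrictScalars ℤ) ⊔ (L ⊓ Fᗮ.restrictScalars ℤ))) ≃ₗ[ℤ]
      (↥(projLat F L) ⧸ Submodule.comap (projLat F L).subtype (L ⊓ F.restrictScalars ℤ))) ∧
    Nonempty ((↥L ⧸ Submodule.comap L.subtype
        ((L ⊓ F.restrictScalars ℤ) ⊔ (L ⊓ Fᗮ.restrictScalars ℤ))) ≃ₗ[ℤ]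
      (↥(projLat Fᗮ L) ⧸ Submodule.comap (projLat Fᗮ L).subtype (L ⊓ Fᗮ.restrictScalars ℤ))) ∧
    Nonempty ((↥L ⧸ Submodule.comap L.subtype
        ((L ⊓ F.restrictScalars ℤ) ⊔ (L ⊓ Fᗮ.restrictScalars ℤ))) ≃ₗ[ℤ]
      (↥(projLat F L ⊔ projLat Fᗮ L) ⧸
        Submodule.comap (projLat F L ⊔ projLat Fᗮ L).subtype L)) := by
  classical
  set K := (L ⊓ F.restrictScalars ℤ) ⊔ (L ⊓ Fᗮ.restrictScalars ℤ) with hK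
  -- first isomorphism
  have iso1 : ∀ (G : Submodule ℝ E),
      Nonempty ((↥L ⧸ Submodule.comap L.subtype
        ((L ⊓ G.restrictScalars ℤ) ⊔ (L ⊓ Gᗮ.restrictScalars ℤ))) ≃ₗ[ℤ]
      (↥(projLat G L) ⧸ Submodule.comap (projLat G L).subtype (L ⊓ G.restrictScalars ℤ))) := by
    intro G
    set S := Submodule.comap (projLat G L).subtype (L ⊓ G.restrictScalars ℤ) with hS
    have hres : ∀ x ∈ L, projMap G x ∈ projLat G L := fun x hx => projMap_mem_projLat G L hx
    set f : ↥L →ₗ[ℤ] ↥(projLat G L) ⧸ S :=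
      S.mkQ.comp ((projMap G).restrict hres) with hf
    have hsurj : Function.Surjective f := by
      intro y
      induction y using Submodule.Quotient.induction_on with
      | _ z =>
        obtain ⟨x, hx, hxz⟩ := z.2
        refine ⟨⟨x, hx⟩, ?_⟩
        have : ((projMap G).restrict hres) ⟨x, hx⟩ = z := Subtype.ext hxz
        simp [hf, this]
    have hker : LinearMap.ker f = Submodule.comap L.subtype
        ((L ⊓ G.restrictScalars ℤ) ⊔ (L ⊓ Gᗮ.restrictScalars ℤ)) := by
      ext x
      simp only [hf, LinearMap.mem_ker, LinearMap.comp_apply, Submodule.mkQ_apply,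
        Submodule.Quotient.mk_eq_zero, Submodule.mem_comap]
      change projMap G (x : E) ∈ L ⊓ G.restrictScalars ℤ ↔ _
      rw [Submodule.mem_inf]
      constructor
      · intro h; exact (projMap_mem_iff L G x.2).mp h.1
      · intro h; exact ⟨(projMap_mem_iff L G x.2).mpr h, projMap_mem' G x⟩
    exact ⟨(Submodule.quotEquivOfEq _ _ hker.symm).trans
      (f.quotKerEquivOfSurjective hsurj)⟩
  have h1 := iso1 F
  have h2' := iso1 Fᗮ
  refine ⟨h1, ?_, ?_⟩
  · -- use Fᗮᗮ = F to fix the second one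
    have hFF : Fᗮᗮ = F := Submodule.orthogonal_orthogonal F
    obtain ⟨e⟩ := h2'
    refine ⟨?_⟩
    have hKeq : (L ⊓ Fᗮ.restrictScalars ℤ) ⊔ (L ⊓ Fᗮᗮ.restrictScalars ℤ) = K := by
      rw [hFF, sup_comm]
    exact (Submodule.quotEquivOfEq _ _ (by rw [hKeq])).symm.trans e
  · -- third isomorphism
    set P := projLat F L ⊔ projLat Fᗮ L with hP
    set S := Submodule.comap P.subtype L with hS
    have hmemP : ∀ x ∈ L, projMap F x ∈ P := fun x hx =>
      Submodule.mem_sup_left (projMap_mem_projLat F L hx)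
    set f : ↥L →ₗ[ℤ] ↥P ⧸ S :=
      S.mkQ.comp ((projMap F).restrict hmemP) with hf
    have hsurj : Function.Surjective f := by
      intro y
      induction y using Submodule.Quotient.induction_on with
      | _ z =>
        rcases Submodule.mem_sup.mp z.2 with ⟨u, hu, v, hv, huv⟩
        obtain ⟨a, ha, hau⟩ := hu
        obtain ⟨b, hb, hbv⟩ := hv
        refine ⟨⟨a - b, Submodule.sub_mem L ha hb⟩, ?_⟩
        simp only [hf, LinearMap.comp_apply, Submodule.mkQ_apply]
        rw [Submodule.Quotient.eq]
        change projMap F ((a : E) - b) - (z : E) ∈ L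
        have : projMap F ((a : E) - b) - (z : E) = -b := by
          have hb2 := projMap_add_orth F b
          rw [map_sub, ← huv, ← hau, ← hbv]
          rw [show projMap F a - projMap F b - (projMap F a + projMap Fᗮ b)
              = -(projMap F b + projMap Fᗮ b) by abel, hb2]
        rw [this]
        exact Submodule.neg_mem L hb
    have hker : LinearMap.ker f = Submodule.comap L.subtype K := by
      ext x
      simp only [hf, LinearMap.mem_ker, LinearMap.comp_apply, Submodule.mkQ_apply,
        Submodule.Quotient.mk_eq_zero, Submodule.mem_comap]
      change projMap F (x : E) ∈ L ↔ _
      exact projMap_mem_iff L F x.2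
    exact ⟨(Submodule.quotEquivOfEq _ _ hker.symm).trans
      (f.quotKerEquivOfSurjective hsurj)⟩
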